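/- Let F be a convex class of probability measures on Ω, let A ⊆ ℝ^k be closed, and let T : F → A be surjective and mixture-continuous. If S : A × Ω → ℝ is strictly F-consistent for T and the expected score S̄(·,F) : A → ℝ is continuous for every F ∈ F, then S is F-self-calibrated for T: for all ε > 0 and all F ∈ F there is δ = δ(ε,F) > 0 such that for all x ∈ A and t = T(F), S̄(x,F) − S̄(t,F) < δ implies ‖t − x‖ < ε. -/
import Mathlib


open MeasureTheory ENNReal

noncomputable def escore {α Ω : Type*} [MeasurableSpace Ω]
    (S : α → Ω → ℝ) (x : α) (F : Measure Ω) : ℝ :=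
  ∫ y, S x y ∂F

/-- The mixture `(1 - lam) • F + lam • G` of two measures. -/
noncomputable def mix {Ω : Type*} [MeasurableSpace Ω]
    (F G : Measure Ω) (lam : ℝ) : Measure Ω :=
  ENNReal.ofReal (1 - lam) • F + ENNReal.ofReal lam • G

/-- The class `𝓕` is convex (closed under mixtures). -/
def MixConvex {Ω : Type*} [MeasurableSpace Ω] (𝓕 : Set (Measure Ω)) : Prop :=
  ∀ F ∈ 𝓕, ∀ G ∈ 𝓕, ∀ lam ∈ Set.Icc (0:ℝ) 1, mix F G lam ∈ 𝓕

/-- `S` is an `𝓕`-consistent scoring function for `T` on the action domain `A`. -/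
def Consistent {α Ω : Type*} [MeasurableSpace Ω]
    (𝓕 : Set (Measure Ω)) (A : Set α) (T : Measure Ω → α) (S : α → Ω → ℝ) : Prop :=
  ∀ F ∈ 𝓕, ∀ x ∈ A, escore S (T F) F ≤ escore S x F

/-- `S` is a strictly `𝓕`-consistent scoring function for `T` on the action domain `A`. -/
def StrictlyConsistent {α Ω : Type*} [MeasurableSpace Ω]
    (𝓕 : Set (Measure Ω)) (A : Set α) (T : Measure Ω → α) (S : α → Ω → ℝ) : Prop :=
  Consistent 𝓕 A T S ∧
    ∀ F ∈ 𝓕, ∀ x ∈ A, escore S x F = escore S (T F) F → x = T F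

/-- `T` is mixture-continuous: `fun lam => T ((1-lam) • F + lam • G)` is continuous on `[0,1]`. -/
def MixContinuous {Ω : Type*} [MeasurableSpace Ω] {k : ℕ}
    (𝓕 : Set (Measure Ω)) (T : Measure Ω → (Fin k → ℝ)) : Prop :=
  ∀ F ∈ 𝓕, ∀ G ∈ 𝓕, ContinuousOn (fun lam => T (mix F G lam)) (Set.Icc (0:ℝ) 1)

lemma mix_zero {Ω : Type*} [MeasurableSpace Ω] (F G : Measure Ω) : mix F G 0 = F := by
  simp [mix]

lemma mix_one {Ω : Type*} [MeasurableSpace Ω] (F G : Measure Ω) : mix F G 1 = G := by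
  simp [mix]

lemma escore_mix {α Ω : Type*} [MeasurableSpace Ω] (S : α → Ω → ℝ) (z : α)
    (F G : Measure Ω) (lam : ℝ) (h0 : 0 ≤ lam) (h1 : lam ≤ 1)
    (hF : Integrable (S z) F) (hG : Integrable (S z) G) :
    escore S z (mix F G lam) = (1 - lam) * escore S z F + lam * escore S z G := by
  unfold escore mix
  rw [integral_add_measure (hF.smul_measure ofReal_ne_top) (hG.smul_measure ofReal_ne_top),
      integral_smul_measure, integral_smul_measure,
      ENNReal.toReal_ofReal (by linarith), ENNReal.toReal_ofReal h0, smul_eq_mul, smul_eq_mul]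

/-- If `𝓕` is convex, `A` is closed, `T` is surjective and
mixture-continuous, `S` is strictly `𝓕`-consistent for `T`, and `S̄(·,F)` is continuous
on `A` for every `F ∈ 𝓕`, then `S` is `𝓕`-self-calibrated for `T`. -/
theorem statement4 {Ω : Type*} [MeasurableSpace Ω] {k : ℕ}
    (𝓕 : Set (Measure Ω)) (hprob : ∀ F ∈ 𝓕, IsProbabilityMeasure F)
    (hconv : MixConvex 𝓕)
    (A : Set (Fin k → ℝ)) (hAclosed : IsClosed A)
    (T : Measure Ω → (Fin k → ℝ))
    (hTA : ∀ F ∈ 𝓕, T F ∈ A)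
    (hmix : MixContinuous 𝓕 T)
    (hsurj : ∀ x ∈ A, ∃ F ∈ 𝓕, T F = x)
    (S : (Fin k → ℝ) → Ω → ℝ)
    (hSint : ∀ x ∈ A, ∀ F ∈ 𝓕, Integrable (S x) F)
    (hS : StrictlyConsistent 𝓕 A T S)
    (hcont : ∀ F ∈ 𝓕, ContinuousOn (fun x => escore S x F) A) :
    ∀ ε > (0:ℝ), ∀ F ∈ 𝓕, ∃ δ > (0:ℝ), ∀ x ∈ A,
      escore S x F - escore S (T F) F < δ → ‖T F - x‖ < ε := by
  intro ε hε F hF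
  set t := T F with ht
  have htA : t ∈ A := hTA F hF
  -- monotonicity of expected score along mixture paths
  have hmono : ∀ G ∈ 𝓕, ∀ lam ∈ Set.Icc (0:ℝ) 1,
      escore S (T (mix F G lam)) F ≤ escore S (T G) F := by
    intro G hG lam hlam
    obtain ⟨h0, h1⟩ := hlam
    rcases eq_or_lt_of_le h1 with h1' | h1'
    · rw [h1', mix_one]
    · have hFl : mix F G lam ∈ 𝓕 := hconv F hF G hG lam ⟨h0, h1⟩
      have hyA : T (mix F G lam) ∈ A := hTA _ hFl
      have hxA : T G ∈ A := hTA G hG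
      have hc1 : escore S (T (mix F G lam)) (mix F G lam) ≤ escore S (T G) (mix F G lam) :=
        hS.1 _ hFl _ hxA
      have hc2 : escore S (T G) G ≤ escore S (T (mix F G lam)) G := hS.1 G hG _ hyA
      rw [escore_mix S _ F G lam h0 h1 (hSint _ hyA F hF) (hSint _ hyA G hG),
          escore_mix S _ F G lam h0 h1 (hSint _ hxA F hF) (hSint _ hxA G hG)] at hc1
      nlinarith [mul_le_mul_of_nonneg_left hc2 h0]
  -- projection onto the sphere via the intermediate value theorem
  have hpath : ∀ x ∈ A, ε ≤ ‖t - x‖ →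
      ∃ y ∈ A, ‖t - y‖ = ε ∧ escore S y F ≤ escore S x F := by
    intro x hx hex
    obtain ⟨G, hG, hTG⟩ := hsurj x hx
    have hcont' : ContinuousOn (fun lam => ‖t - T (mix F G lam)‖) (Set.Icc (0:ℝ) 1) :=
      (continuousOn_const.sub (hmix F hF G hG)).norm
    have hf0 : ‖t - T (mix F G 0)‖ = 0 := by rw [mix_zero, ← ht, sub_self, norm_zero]
    have hf1 : ε ≤ ‖t - T (mix F G 1)‖ := by rw [mix_one, hTG]; exact hex
    have hiv := intermediate_value_Icc (by norm_num : (0:ℝ) ≤ 1) hcont'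
    have hmem : ε ∈ Set.Icc ‖t - T (mix F G 0)‖ ‖t - T (mix F G 1)‖ := by
      rw [hf0]; exact ⟨hε.le, hf1⟩
    obtain ⟨lam, hlam, hflam⟩ := hiv hmem
    refine ⟨T (mix F G lam), hTA _ (hconv F hF G hG lam hlam), hflam, ?_⟩
    rw [← hTG]
    exact hmono G hG lam hlam
  -- the sphere piece of A
  set K := A ∩ {y | ‖t - y‖ = ε} with hK
  have hKclosed : IsClosed K :=
    hAclosed.inter (isClosed_eq (continuous_const.sub continuous_id).norm continuous_const)
  have hKbdd : Bornology.IsBounded K := by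
    apply (Metric.isBounded_closedBall (x := t) (r := ε)).subset
    intro y hy
    rw [Metric.mem_closedBall, dist_comm, dist_eq_norm]
    exact le_of_eq hy.2
  have hKcpt : IsCompact K := Metric.isCompact_of_isClosed_isBounded hKclosed hKbdd
  rcases Set.eq_empty_or_nonempty K with hKe | hKne
  · -- no sphere points: every x ∈ A is within ε of t
    refine ⟨1, one_pos, fun x hx _ => ?_⟩
    by_contra h
    push_neg at h
    obtain ⟨y, hyA, hyε, -⟩ := hpath x hx h
    exact Set.eq_empty_iff_forall_notMem.mp hKe y ⟨hyA, hyε⟩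
  · obtain ⟨y₀, hy₀K, hy₀min⟩ :=
      hKcpt.exists_isMinOn hKne ((hcont F hF).mono Set.inter_subset_left)
    have hy₀A : y₀ ∈ A := hy₀K.1
    have hy₀ne : y₀ ≠ t := by
      intro hcontra
      have : ‖t - y₀‖ = ε := hy₀K.2
      rw [hcontra, sub_self, norm_zero] at this
      exact absurd this.symm (ne_of_gt hε)
    have hδpos : 0 < escore S y₀ F - escore S t F := by
      have hle : escore S t F ≤ escore S y₀ F := hS.1 F hF y₀ hy₀A
      rcases eq_or_lt_of_le hle with heq | hlt
      · exact absurd (hS.2 F hF y₀ hy₀A heq.symm) hy₀ne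
      · linarith
    refine ⟨escore S y₀ F - escore S t F, hδpos, fun x hx hgap => ?_⟩
    by_contra h
    push_neg at h
    obtain ⟨y, hyA, hyε, hyle⟩ := hpath x hx h
    have hymin : escore S y₀ F ≤ escore S y F := hy₀min ⟨hyA, hyε⟩
    linarith
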